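/- Let Q : X → X be a linear operator with ‖Q − I‖ < 1 (operator norm). Then for every q ∈ X the equation (Q − I)P_K(x) + x = −q has exactly one solution x ∈ X. -/
import Mathlib


open RealInnerProductSpace Filter Topology

variable {X : Type*} [NormedAddCommGroup X] [InnerProductSpace ℝ X] [FiniteDimensional ℝ X]

/-- The Clarke generalized Jacobian of a map `F : X → X` at `x`: the convex hull of all
limits of Fréchet derivatives of `F` along sequences of differentiability points
converging to `x`. -/
def clarkeJacobian (F : X → X) (x : X) : Set (X →L[ℝ] X) :=
  convexHull ℝ {V : X →L[ℝ] X | ∃ u : ℕ → X,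
    (∀ k, DifferentiableAt ℝ F (u k)) ∧
    Tendsto u atTop (𝓝 x) ∧
    Tendsto (fun k => fderiv ℝ F (u k)) atTop (𝓝 V)}

/-- `P` is the metric projection onto `K`: `P z` belongs to `K` and is a nearest point
of `K` to `z`. -/
def IsMetricProjection (K : Set X) (P : X → X) : Prop :=
  ∀ z : X, P z ∈ K ∧ ∀ y ∈ K, ‖z - P z‖ ≤ ‖z - y‖

/-- If `‖Q − I‖ < 1`, then for every `q` the projection equation `(Q − I) (P x) + x = −q`
has exactly one solution. -/
theorem quadProjEquation_existsUnique_of_norm_lt_one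
    (K : Set X) (hne : K.Nonempty) (hcl : IsClosed K) (hconv : Convex ℝ K)
    (hcone : ∀ c : ℝ, 0 ≤ c → ∀ y ∈ K, c • y ∈ K)
    (P : X → X) (hP : IsMetricProjection K P)
    (Q : X →L[ℝ] X) (hQ : ‖Q - 1‖ < 1) (q : X) :
    ∃! x : X, (Q - 1) (P x) + x = -q := by
  haveI : Nonempty K := hne.to_subtype
  -- variational characterization of the projection
  have hproj : ∀ z : X, ∀ w ∈ K, ⟪z - P z, w - P z⟫ ≤ 0 := by
    intro z
    have h1 := (hP z).1
    have h2 := (hP z).2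
    have heq : ‖z - P z‖ = ⨅ w : K, ‖z - w‖ := by
      apply le_antisymm
      · exact le_ciInf fun w => h2 w w.2
      · refine ciInf_le ?_ (⟨P z, h1⟩ : K)
        exact ⟨0, by rintro r ⟨w, rfl⟩; positivity⟩
    exact (norm_eq_iInf_iff_real_inner_le_zero hconv h1).mp heq
  -- nonexpansiveness of P
  have hlip : ∀ x y : X, ‖P x - P y‖ ≤ ‖x - y‖ := by
    intro x y
    have h1 := hproj x (P y) (hP y).1
    have h2 := hproj y (P x) (hP x).1
    have key : ⟪P x - P y, P x - P y⟫ ≤ ⟪x - y, P x - P y⟫ := by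
      have c1 := real_inner_comm (P x) (P y)
      have c2 := real_inner_comm x (P x)
      have c3 := real_inner_comm y (P y)
      simp only [inner_sub_left, inner_sub_right] at h1 h2 ⊢
      linarith
    have hsq : ‖P x - P y‖ ^ 2 ≤ ‖x - y‖ * ‖P x - P y‖ := by
      calc ‖P x - P y‖ ^ 2 = ⟪P x - P y, P x - P y⟫ :=
            (real_inner_self_eq_norm_sq _).symm
        _ ≤ ⟪x - y, P x - P y⟫ := key
        _ ≤ ‖x - y‖ * ‖P x - P y‖ := real_inner_le_norm _ _
    rcases eq_or_lt_of_le (norm_nonneg (P x - P y)) with h0 | h0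
    · rw [← h0]; positivity
    · have := hsq
      rw [sq] at this
      exact le_of_mul_le_mul_right this h0
  -- the contraction
  set T : X → X := fun x => -q - (Q - 1) (P x) with hT
  have hcontr : ContractingWith ‖Q - 1‖₊ T := by
    constructor
    · exact_mod_cast hQ
    · apply LipschitzWith.of_dist_le_mul
      intro x y
      have hTd : T x - T y = (Q - 1) (P y - P x) := by
        simp only [hT, map_sub]
        abel
      rw [dist_eq_norm, dist_eq_norm, hTd]
      have h1 : ‖(Q - 1) (P y - P x)‖ ≤ ‖Q - 1‖ * ‖P y - P x‖ := (Q - 1).le_opNorm _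
      have h2 : ‖P y - P x‖ ≤ ‖y - x‖ := hlip y x
      have h3 : ‖y - x‖ = ‖x - y‖ := norm_sub_rev y x
      have h4 : (‖Q - 1‖₊ : ℝ) = ‖Q - 1‖ := rfl
      rw [h4]
      nlinarith [norm_nonneg (Q - 1)]
  haveI : CompleteSpace X := FiniteDimensional.complete ℝ X
  haveI : Nonempty X := ⟨0⟩
  obtain ⟨x, hx⟩ : ∃ x, T x = x := ⟨hcontr.fixedPoint T, hcontr.fixedPoint_isFixedPt⟩
  refine ⟨x, ?_, ?_⟩
  · have : -q - (Q - 1) (P x) = x := hx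
    linear_combination (norm := module) -this
  · intro y hy
    have hyT : T y = y := by
      simp only [hT]
      linear_combination (norm := module) -hy
    have : y = hcontr.fixedPoint T := hcontr.fixedPoint_unique hyT
    rw [this, ← hcontr.fixedPoint_unique (f := T) hx]
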